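/- (Theorem 1, converse direction.) Let n > 0, k ∈ ℝ, K > 0, D ∈ ℝ. Let a, φ : ℝ → ℝ be twice differentiable on an open interval I with a > 0 on I, let v : ℝ → ℝ be a function, set H(t) = a'(t)/a(t), ρ_T(t) = φ'(t)²/2 + v(t) + D/a(t)^n, p_T(t) = φ'(t)²/2 − v(t) + (n−3)D/(3 a(t)^n), and assume for all t ∈ I: H(t)² + k/a(t)² = (K²/3) ρ_T(t) and a''(t)/a(t) = −(K²/6)(ρ_T(t) + 3 p_T(t)). Let σ be differentiable on I with σ'(t) = a(t)^(−n/2), let J be an open interval and g : ℝ → ℝ twice differentiable on J with g(J) ⊆ I and σ(g(x)) = x for all x ∈ J. Define E = −K² n² D/12, P(x) = (n K²/4) · a(g(x))^n · φ'(g(x))², and u(x) = a(g(x))^(−n/2). Then for all x ∈ J: u''(x) + (E − P(x)) u(x) = −(n k/2) u(x)^((4−n)/n). -/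

import Mathlib

/-- Theorem 1, converse direction: from a solution (a, φ, V) of the
Einstein equations one obtains a solution u of the non-linear Schrödinger-type
equation. -/
theorem einstein_to_schrodinger
    (n k K D : ℝ) (hn : 0 < n) (hK : 0 < K)
    (t₁ t₂ x₁ x₂ : ℝ) (a φ v : ℝ → ℝ)
    (ha : ∀ t ∈ Set.Ioo t₁ t₂, DifferentiableAt ℝ a t)
    (ha' : ∀ t ∈ Set.Ioo t₁ t₂, DifferentiableAt ℝ (deriv a) t)
    (hφ : ∀ t ∈ Set.Ioo t₁ t₂, DifferentiableAt ℝ φ t)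
    (hφ' : ∀ t ∈ Set.Ioo t₁ t₂, DifferentiableAt ℝ (deriv φ) t)
    (hapos : ∀ t ∈ Set.Ioo t₁ t₂, 0 < a t)
    (H ρT pT : ℝ → ℝ)
    (hH : H = fun t => deriv a t / a t)
    (hρ : ρT = fun t => (deriv φ t) ^ 2 / 2 + v t + D / a t ^ n)
    (hp : pT = fun t => (deriv φ t) ^ 2 / 2 - v t + (n - 3) * D / (3 * a t ^ n))
    (hFried : ∀ t ∈ Set.Ioo t₁ t₂, H t ^ 2 + k / a t ^ 2 = K ^ 2 / 3 * ρT t)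
    (hAcc : ∀ t ∈ Set.Ioo t₁ t₂,
      deriv (deriv a) t / a t = -(K ^ 2 / 6) * (ρT t + 3 * pT t))
    (σ g : ℝ → ℝ)
    (hσ : ∀ t ∈ Set.Ioo t₁ t₂, DifferentiableAt ℝ σ t)
    (hσ' : ∀ t ∈ Set.Ioo t₁ t₂, deriv σ t = a t ^ (-(n / 2)))
    (hg : ∀ x ∈ Set.Ioo x₁ x₂, DifferentiableAt ℝ g x)
    (hg' : ∀ x ∈ Set.Ioo x₁ x₂, DifferentiableAt ℝ (deriv g) x)
    (hgJ : ∀ x ∈ Set.Ioo x₁ x₂, g x ∈ Set.Ioo t₁ t₂)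
    (hinv : ∀ x ∈ Set.Ioo x₁ x₂, σ (g x) = x)
    (E : ℝ) (P u : ℝ → ℝ)
    (hE : E = -K ^ 2 * n ^ 2 * D / 12)
    (hP : P = fun x => n * K ^ 2 / 4 * a (g x) ^ n * (deriv φ (g x)) ^ 2)
    (hu : u = fun x => a (g x) ^ (-(n / 2))) :
    ∀ x ∈ Set.Ioo x₁ x₂,
      deriv (deriv u) x + (E - P x) * u x
        = -(n * k / 2) * u x ^ ((4 - n) / n) := by
  -- derivative of g
  have hgder : ∀ y ∈ Set.Ioo x₁ x₂, deriv g y = a (g y) ^ ((n/2 : ℝ)) := by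
    intro y hy
    have hty := hgJ y hy
    have hAy := hapos _ hty
    have h1 : HasDerivAt (σ ∘ g) (deriv σ (g y) * deriv g y) y :=
      ((hσ _ hty).hasDerivAt).comp y ((hg y hy).hasDerivAt)
    have h2 : deriv (σ ∘ g) y = 1 := by
      have heq : (σ ∘ g) =ᶠ[nhds y] id :=
        Filter.eventuallyEq_of_mem (Ioo_mem_nhds hy.1 hy.2) (fun z hz => hinv z hz)
      rw [heq.deriv_eq, deriv_id]
    have h3 : deriv σ (g y) * deriv g y = 1 := by rw [← h1.deriv, h2]
    rw [hσ' _ hty] at h3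
    have hpow : a (g y) ^ ((n/2:ℝ)) * a (g y) ^ (-(n/2):ℝ) = 1 := by
      rw [← Real.rpow_add hAy]; norm_num
    calc deriv g y = a (g y) ^ ((n/2:ℝ)) * (a (g y) ^ (-(n/2):ℝ) * deriv g y) := by
          rw [← mul_assoc, hpow, one_mul]
      _ = a (g y) ^ ((n/2:ℝ)) := by rw [h3, mul_one]
  -- first derivative of u
  have huder : ∀ y ∈ Set.Ioo x₁ x₂,
      HasDerivAt u (-(n/2) * (deriv a (g y) / a (g y))) y := by
    intro y hy
    have hty := hgJ y hy
    have hAy := hapos _ hty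
    have hag : HasDerivAt (fun z => a (g z)) (deriv a (g y) * deriv g y) y :=
      ((ha _ hty).hasDerivAt).comp y ((hg y hy).hasDerivAt)
    have hrp : HasDerivAt (fun s : ℝ => s ^ (-(n/2) : ℝ))
        ((-(n/2)) * a (g y) ^ ((-(n/2) : ℝ) - 1)) (a (g y)) :=
      Real.hasDerivAt_rpow_const (Or.inl hAy.ne')
    have hcomp := hrp.comp y hag
    rw [hu]
    refine hcomp.congr_deriv ?_
    rw [hgder y hy]
    have hc : a (g y) ^ ((-(n/2):ℝ) - 1) * a (g y) ^ ((n/2:ℝ)) = (a (g y))⁻¹ := by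
      rw [← Real.rpow_add hAy, show (-(n/2):ℝ) - 1 + n/2 = -1 by ring, Real.rpow_neg_one]
    linear_combination -(n/2 * deriv a (g y)) * hc
  intro x hx
  have hxI : Set.Ioo x₁ x₂ ∈ nhds x := Ioo_mem_nhds hx.1 hx.2
  have ht : g x ∈ Set.Ioo t₁ t₂ := hgJ x hx
  set A := a (g x) with hAdef
  set A' := deriv a (g x) with hA'def
  set A'' := deriv (deriv a) (g x) with hA''def
  set F := deriv φ (g x) with hFdef
  have hA : 0 < A := hapos _ ht
  set X : ℝ := A ^ ((n/2:ℝ)) with hXdef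
  have hXpos : 0 < X := Real.rpow_pos_of_pos hA _
  have hAn : X * X = A ^ (n:ℝ) := by
    rw [hXdef, ← Real.rpow_add hA, show (n/2:ℝ) + n/2 = n by ring]
  -- second derivative
  have hev : deriv u =ᶠ[nhds x] fun y => -(n/2) * (deriv a (g y) / a (g y)) := by
    filter_upwards [hxI] with y hy using (huder y hy).deriv
  have hag : HasDerivAt (fun z => a (g z)) (A' * deriv g x) x :=
    ((ha _ ht).hasDerivAt).comp x ((hg x hx).hasDerivAt)
  have ha'g : HasDerivAt (fun z => deriv a (g z)) (A'' * deriv g x) x :=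
    ((ha' _ ht).hasDerivAt).comp x ((hg x hx).hasDerivAt)
  have hq : HasDerivAt (fun z => deriv a (g z) / a (g z))
      ((A'' * deriv g x * A - A' * (A' * deriv g x)) / A ^ 2) x :=
    ha'g.div hag hA.ne'
  have hw : HasDerivAt (fun z => -(n/2) * (deriv a (g z) / a (g z)))
      (-(n/2) * ((A'' * deriv g x * A - A' * (A' * deriv g x)) / A ^ 2)) x :=
    hq.const_mul (-(n/2))
  have hu'' : deriv (deriv u) x
      = -(n/2) * ((A'' * X * A - A' * (A' * X)) / A ^ 2) := by
    rw [hev.deriv_eq, hw.deriv, hgder x hx]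
  -- Einstein equations at t = g x
  have h1 := hAcc _ ht
  have h2 := hFried _ ht
  simp only [hρ, hp] at h1
  simp only [hH, hρ] at h2
  simp only [← hAdef, ← hA'def, ← hA''def, ← hFdef, ← hAn] at h1 h2
  have hXne : X ≠ 0 := hXpos.ne'
  have hAne : (A:ℝ) ≠ 0 := hA.ne'
  have e1' : A'' = (-(K ^ 2 / 6) * (F ^ 2 / 2 + v (g x) + D / (X * X)
      + 3 * (F ^ 2 / 2 - v (g x) + (n - 3) * D / (3 * (X * X))))) * A :=
    (div_eq_iff hAne).mp h1
  have e2' : A' ^ 2 = (K ^ 2 / 3 * (F ^ 2 / 2 + v (g x) + D / (X * X)) - k / A ^ 2) * A ^ 2 := by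
    have h2' : A' ^ 2 / A ^ 2 = K ^ 2 / 3 * (F ^ 2 / 2 + v (g x) + D / (X * X)) - k / A ^ 2 := by
      rw [← div_pow]; linarith [h2]
    exact (div_eq_iff (pow_ne_zero 2 hAne)).mp h2'
  have e1p : 6 * (A'' * (X * X))
      = -(K ^ 2) * (2 * F ^ 2 * (X * X) - 2 * v (g x) * (X * X) + (n - 2) * D) * A := by
    rw [e1']; field_simp; ring
  have e2p : 3 * ((A' ^ 2 + k) * (X * X))
      = K ^ 2 * ((F ^ 2 / 2 + v (g x)) * (X * X) + D) * A ^ 2 := by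
    rw [e2']; field_simp; ring
  -- rewrite u x and its power
  have hux : u x = X⁻¹ := by
    rw [hu]; simp only [← hAdef]
    rw [Real.rpow_neg hA.le]
  have hupow : u x ^ ((4 - n)/n) = X / A ^ 2 := by
    rw [hu]; simp only [← hAdef]
    rw [← Real.rpow_natCast A 2, ← Real.rpow_mul hA.le,
      show (-(n/2)) * ((4 - n)/n) = n/2 - (2:ℕ) by field_simp; ring,
      Real.rpow_sub hA, hXdef]
  have hPx : P x = n * K ^ 2 / 4 * (X * X) * F ^ 2 := by
    rw [hP]; simp only [← hAdef, ← hFdef, ← hAn]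
  rw [hu'', hupow, hux, hPx, hE]
  field_simp
  linear_combination (-8 * A) * e1p + 16 * e2p
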